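/- arXiv:math/0509360 — 3 statements merged into one kernel-verified Lean document; each statement's English description precedes it below -/
import Mathlib

section
/- Let (S_j)_{j=0}^{N-1} be a representation of the Cuntz algebra 𝒪_N on H, let (σ_i)_{i=0}^{N-1} be a complete and non-overlapping iterated function system on a compact metric space X, and assume the von Neumann algebra 𝔄 generated by {S_α S_α^* : α a multi-index} is maximal abelian. Let f ∈ H with ‖f‖ = 1 be cyclic for 𝔄 (i.e. {A f : A ∈ 𝔄} is dense in H), and let μ_f be the spectral measure of f. Then for every g ∈ H, any spectral measure μ_g of g is absolutely continuous with respect to μ_f. -/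
open MeasureTheory ContinuousLinearMap
open scoped InnerProductSpace

variable {H : Type*} [NormedAddCommGroup H] [InnerProductSpace ℂ H] [CompleteSpace H]
variable {X : Type*} [MetricSpace X] [CompactSpace X] [MeasurableSpace X] [BorelSpace X]

/-- The word operator `S_α = S_{α 1} ⋯ S_{α k}` associated to a multi-index
`α ∈ {0,…,N-1}^k`. -/
noncomputable def Sw {N : ℕ} (S : Fin N → H →L[ℂ] H) {k : ℕ} (α : Fin k → Fin N) :
    H →L[ℂ] H :=
  (List.ofFn fun i => S (α i)).prod

/-- A family `S_0, …, S_{N-1}` of bounded operators is a representation of the Cuntz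
algebra `𝒪_N` if `S_j^* S_k = δ_{jk} I` and `∑ j, S_j S_j^* = I`. -/
def CuntzRep {N : ℕ} (S : Fin N → H →L[ℂ] H) : Prop :=
  (∀ j k : Fin N, adjoint (S j) ∘L S k = if j = k then 1 else 0) ∧
    ∑ j : Fin N, S j ∘L adjoint (S j) = 1

/-- The composition `σ_{i_1} ∘ ⋯ ∘ σ_{i_k}` for a multi-index `i`. -/
def compIFS {N : ℕ} (σ : Fin N → X → X) {k : ℕ} (i : Fin k → Fin N) : X → X :=
  (List.ofFn fun j => σ (i j)).foldr (· ∘ ·) id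

/-- `A_k(i) = σ_{i_1} ∘ ⋯ ∘ σ_{i_k}(X)`. -/
def Ak {N : ℕ} (σ : Fin N → X → X) {k : ℕ} (i : Fin k → Fin N) : Set X :=
  Set.range (compIFS σ i)

/-- The IFS is complete if the diameters of `A_k(i_1,…,i_k)` tend to `0` along every
infinite word `(i_1, i_2, …)`. -/
def CompleteIFS {N : ℕ} (σ : Fin N → X → X) : Prop :=
  ∀ s : ℕ → Fin N,
    Filter.Tendsto (fun k : ℕ => Metric.diam (Ak σ fun j : Fin k => s j))
      Filter.atTop (nhds 0)

/-- The IFS is non-overlapping if for each `k` the sets `A_k(i)` are pairwise disjoint. -/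
def NonOverlapping {N : ℕ} (σ : Fin N → X → X) : Prop :=
  ∀ k : ℕ, ∀ i i' : Fin k → Fin N, i ≠ i' → Disjoint (Ak σ i) (Ak σ i')

/-- A Borel measure `μ` on `X` is a spectral measure of `g` if `μ(X) = ‖g‖²`
and `μ(A_k(i)) = ‖S_i^* g‖²` for every `k ≥ 1` and multi-index `i`. -/
def IsSpectralMeasureX {N : ℕ} (S : Fin N → H →L[ℂ] H) (σ : Fin N → X → X) (g : H)
    (μ : Measure X) : Prop :=
  μ Set.univ = ENNReal.ofReal (‖g‖ ^ 2) ∧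
    ∀ k : ℕ, 1 ≤ k → ∀ i : Fin k → Fin N,
      μ (Ak σ i) = ENNReal.ofReal (‖adjoint (Sw S i) g‖ ^ 2)

/-- The set of projections `S_α S_α^*`, `α` a multi-index. -/
noncomputable def projSet {N : ℕ} (S : Fin N → H →L[ℂ] H) : Set (H →L[ℂ] H) :=
  {A | ∃ k : ℕ, 1 ≤ k ∧ ∃ α : Fin k → Fin N, A = Sw S α ∘L adjoint (Sw S α)}

/-- The von Neumann algebra generated by the projections `S_α S_α^*`, realized as the
double commutant of that (self-adjoint) family. -/
noncomputable def vN {N : ℕ} (S : Fin N → H →L[ℂ] H) : Set (H →L[ℂ] H) :=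
  Set.centralizer (Set.centralizer (projSet S))

lemma Sw_zero {N : ℕ} (S : Fin N → H →L[ℂ] H) (α : Fin 0 → Fin N) : Sw S α = 1 := by
  simp [Sw]

lemma Sw_succ {N : ℕ} (S : Fin N → H →L[ℂ] H) {k : ℕ} (α : Fin (k+1) → Fin N) :
    Sw S α = S (α 0) ∘L Sw S (Fin.tail α) := by
  simp [Sw, List.ofFn_succ, Fin.tail]
  rfl

lemma Sw_isom {N : ℕ} {S : Fin N → H →L[ℂ] H} (hS : CuntzRep S) {k : ℕ}
    (α : Fin k → Fin N) : adjoint (Sw S α) ∘L Sw S α = 1 := by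
  induction k with
  | zero => simp [Sw_zero, one_def, ContinuousLinearMap.adjoint_id]
  | succ k ih =>
      rw [Sw_succ, adjoint_comp]
      have h1 : adjoint (S (α 0)) ∘L S (α 0) = 1 := by
        simpa using hS.1 (α 0) (α 0)
      calc (adjoint (Sw S (Fin.tail α)) ∘L adjoint (S (α 0))) ∘L
            (S (α 0) ∘L Sw S (Fin.tail α))
          = adjoint (Sw S (Fin.tail α)) ∘L ((adjoint (S (α 0)) ∘L S (α 0)) ∘L Sw S (Fin.tail α)) := by
            simp [comp_assoc]
        _ = adjoint (Sw S (Fin.tail α)) ∘L Sw S (Fin.tail α) := by rw [h1]; rfl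
        _ = 1 := ih _

lemma Sw_orth {N : ℕ} {S : Fin N → H →L[ℂ] H} (hS : CuntzRep S) {k : ℕ}
    (α β : Fin k → Fin N) (hab : α ≠ β) : adjoint (Sw S α) ∘L Sw S β = 0 := by
  induction k with
  | zero => exact absurd (funext fun j => j.elim0) hab
  | succ k ih =>
      rw [Sw_succ S α, Sw_succ S β, adjoint_comp]
      have key : (adjoint (Sw S (Fin.tail α)) ∘L adjoint (S (α 0))) ∘L
            (S (β 0) ∘L Sw S (Fin.tail β))
          = adjoint (Sw S (Fin.tail α)) ∘L ((adjoint (S (α 0)) ∘L S (β 0)) ∘L Sw S (Fin.tail β)) := by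
        simp [comp_assoc]
      rw [key, hS.1 (α 0) (β 0)]
      by_cases h0 : α 0 = β 0
      · have htail : Fin.tail α ≠ Fin.tail β := by
          intro hEq
          apply hab
          funext j
          refine Fin.cases h0 (fun j => congrFun hEq j) j
        rw [if_pos h0]
        have : ((1 : H →L[ℂ] H) ∘L Sw S (Fin.tail β)) = Sw S (Fin.tail β) := by rfl
        rw [this, ih _ _ htail]
      · rw [if_neg h0]
        simp

lemma sum_P {N : ℕ} {S : Fin N → H →L[ℂ] H} (hS : CuntzRep S) (k : ℕ) :
    ∑ α : Fin k → Fin N, Sw S α ∘L adjoint (Sw S α) = 1 := by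
  induction k with
  | zero =>
      rw [Fintype.sum_unique (fun α : Fin 0 → Fin N => Sw S α ∘L adjoint (Sw S α))]
      simp [Sw_zero, one_def, ContinuousLinearMap.adjoint_id]
  | succ k ih =>
      rw [← Equiv.sum_comp (Fin.consEquiv fun _ : Fin (k+1) => Fin N)]
      rw [Fintype.sum_prod_type]
      have hterm : ∀ (j : Fin N) (β : Fin k → Fin N),
          Sw S (Fin.consEquiv _ (j, β)) ∘L adjoint (Sw S (Fin.consEquiv _ (j, β)))
            = S j ∘L ((Sw S β ∘L adjoint (Sw S β)) ∘L adjoint (S j)) := by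
        intro j β
        have h1 : Sw S (Fin.consEquiv (fun _ : Fin (k+1) => Fin N) (j, β)) = S j ∘L Sw S β := by
          rw [Sw_succ]
          simp [Fin.consEquiv, Fin.cons_zero, Fin.tail_cons]
        rw [h1, adjoint_comp]
        simp [comp_assoc]
      calc ∑ j : Fin N, ∑ β : Fin k → Fin N,
            Sw S (Fin.consEquiv _ (j, β)) ∘L adjoint (Sw S (Fin.consEquiv _ (j, β)))
          = ∑ j : Fin N, S j ∘L ((∑ β : Fin k → Fin N, Sw S β ∘L adjoint (Sw S β)) ∘L adjoint (S j)) := by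
            refine Finset.sum_congr rfl fun j _ => ?_
            simp only [hterm j, ← mul_def, Finset.mul_sum, Finset.sum_mul]
        _ = 1 := by
            rw [ih]
            have : ∀ j : Fin N, S j ∘L ((1 : H →L[ℂ] H) ∘L adjoint (S j)) = S j ∘L adjoint (S j) := by
              intro j; rfl
            simp only [this]
            exact hS.2

lemma inner_P_self {N : ℕ} (S : Fin N → H →L[ℂ] H) {k : ℕ} (α : Fin k → Fin N) (x : H) :
    RCLike.re ⟪x, (Sw S α ∘L adjoint (Sw S α)) x⟫_ℂ = ‖adjoint (Sw S α) x‖ ^ 2 := by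
  have : ⟪x, (Sw S α ∘L adjoint (Sw S α)) x⟫_ℂ
      = ⟪adjoint (Sw S α) x, adjoint (Sw S α) x⟫_ℂ := by
    rw [ContinuousLinearMap.comp_apply, ← ContinuousLinearMap.adjoint_inner_left]
  rw [this, inner_self_eq_norm_sq]

lemma sum_normsq_eq {N : ℕ} {S : Fin N → H →L[ℂ] H} (hS : CuntzRep S) (k : ℕ) (x : H) :
    ∑ α : Fin k → Fin N, ‖adjoint (Sw S α) x‖ ^ 2 = ‖x‖ ^ 2 := by
    have h1 : ∑ α : Fin k → Fin N, ‖adjoint (Sw S α) x‖ ^ 2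
        = RCLike.re ⟪x, ∑ α : Fin k → Fin N, (Sw S α ∘L adjoint (Sw S α)) x⟫_ℂ := by
      rw [inner_sum, map_sum]
      exact Finset.sum_congr rfl fun α _ => (inner_P_self S α x).symm
    have h2 : ∑ α : Fin k → Fin N, (Sw S α ∘L adjoint (Sw S α)) x = x := by
      rw [← ContinuousLinearMap.sum_apply, sum_P hS k, ContinuousLinearMap.one_apply]
    rw [h2, inner_self_eq_norm_sq] at h1
    exact h1

lemma sum_normsq_le {N : ℕ} {S : Fin N → H →L[ℂ] H} (hS : CuntzRep S) (k : ℕ)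
    (T : Finset (Fin k → Fin N)) (x : H) :
    ∑ α ∈ T, ‖adjoint (Sw S α) x‖ ^ 2 ≤ ‖x‖ ^ 2 := by
  rw [← sum_normsq_eq hS k x]
  exact Finset.sum_le_sum_of_subset_of_nonneg (Finset.subset_univ T)
    (fun α _ _ => sq_nonneg _)

lemma norm_Sw_apply {N : ℕ} {S : Fin N → H →L[ℂ] H} (hS : CuntzRep S) {k : ℕ}
    (α : Fin k → Fin N) (x : H) : ‖Sw S α x‖ = ‖x‖ := by
  have h : ⟪Sw S α x, Sw S α x⟫_ℂ = ⟪x, x⟫_ℂ := by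
    rw [← ContinuousLinearMap.adjoint_inner_left, ← ContinuousLinearMap.comp_apply,
      Sw_isom hS, ContinuousLinearMap.one_apply]
  have h3 : ‖Sw S α x‖ ^ 2 = ‖x‖ ^ 2 := by
    rw [← inner_self_eq_norm_sq (𝕜 := ℂ), ← inner_self_eq_norm_sq (𝕜 := ℂ), h]
  have := congrArg Real.sqrt h3
  rwa [Real.sqrt_sq (norm_nonneg _), Real.sqrt_sq (norm_nonneg _)] at this

lemma norm_P_apply {N : ℕ} {S : Fin N → H →L[ℂ] H} (hS : CuntzRep S) {k : ℕ}
    (α : Fin k → Fin N) (x : H) :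
    ‖(Sw S α ∘L adjoint (Sw S α)) x‖ = ‖adjoint (Sw S α) x‖ := by
  rw [ContinuousLinearMap.comp_apply, norm_Sw_apply hS]

lemma P_comm {N : ℕ} {S : Fin N → H →L[ℂ] H} (hmax : vN S = Set.centralizer (vN S))
    {k : ℕ} (hk : 1 ≤ k) (α : Fin k → Fin N) {A : H →L[ℂ] H} (hA : A ∈ vN S) :
    A ∘L (Sw S α ∘L adjoint (Sw S α)) = (Sw S α ∘L adjoint (Sw S α)) ∘L A := by
  have hP : Sw S α ∘L adjoint (Sw S α) ∈ vN S :=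
    Set.subset_centralizer_centralizer ⟨k, hk, α, rfl⟩
  have hA' : A ∈ Set.centralizer (vN S) := hmax ▸ hA
  have := hA' (Sw S α ∘L adjoint (Sw S α)) hP
  simpa [ContinuousLinearMap.mul_def] using this.symm

lemma norm_adj_Sw_le {N : ℕ} {S : Fin N → H →L[ℂ] H} (hS : CuntzRep S)
    (hmax : vN S = Set.centralizer (vN S)) {k : ℕ} (hk : 1 ≤ k) (α : Fin k → Fin N)
    {A : H →L[ℂ] H} (hA : A ∈ vN S) (f g : H) :
    ‖adjoint (Sw S α) g‖ ≤ ‖A‖ * ‖adjoint (Sw S α) f‖ + ‖adjoint (Sw S α) (g - A f)‖ := by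
  set P := Sw S α ∘L adjoint (Sw S α) with hP
  have h1 : ‖adjoint (Sw S α) g‖ = ‖P g‖ := (norm_P_apply hS α g).symm
  have h2 : P g = P (A f) + P (g - A f) := by
    rw [← map_add]; congr 1; abel
  have h3 : P (A f) = A (P f) := by
    rw [← ContinuousLinearMap.comp_apply, ← ContinuousLinearMap.comp_apply,
      P_comm hmax hk α hA]
  calc ‖adjoint (Sw S α) g‖ = ‖P g‖ := h1
    _ ≤ ‖P (A f)‖ + ‖P (g - A f)‖ := by rw [h2]; exact norm_add_le _ _
    _ ≤ ‖A‖ * ‖P f‖ + ‖P (g - A f)‖ := by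
        rw [h3]; exact add_le_add (A.le_opNorm _) le_rfl
    _ = ‖A‖ * ‖adjoint (Sw S α) f‖ + ‖adjoint (Sw S α) (g - A f)‖ := by
        rw [norm_P_apply hS, norm_P_apply hS]

lemma foldr_comp_eq {α : Type*} (l : List (α → α)) (g : α → α) :
    l.foldr (· ∘ ·) g = l.foldr (· ∘ ·) id ∘ g := by
  induction l with
  | nil => rfl
  | cons f l ih => simp [List.foldr_cons, ih]; rfl

lemma compIFS_snoc {N : ℕ} (σ : Fin N → X → X) {k : ℕ} (i : Fin (k+1) → Fin N) :
    compIFS σ i = compIFS σ (fun j : Fin k => i j.castSucc) ∘ σ (i (Fin.last k)) := by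
  unfold compIFS
  rw [List.ofFn_succ']
  rw [List.concat_eq_append, List.foldr_append]
  simp only [List.foldr_cons, List.foldr_nil]
  rw [foldr_comp_eq]
  rfl

lemma Ak_subset {N : ℕ} (σ : Fin N → X → X) {k : ℕ} (i : Fin (k+1) → Fin N) :
    Ak σ i ⊆ Ak σ (fun j : Fin k => i j.castSucc) := by
  rw [Ak, Ak, compIFS_snoc]
  exact Set.range_comp_subset_range _ _

lemma compIFS_continuous {N : ℕ} {σ : Fin N → X → X} (hcont : ∀ i, Continuous (σ i))
    {k : ℕ} (i : Fin k → Fin N) : Continuous (compIFS σ i) := by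
  unfold compIFS
  induction k with
  | zero => simpa using continuous_id
  | succ k ih =>
      rw [List.ofFn_succ]
      simp only [List.foldr_cons]
      exact Continuous.comp (hcont _) (ih _)

lemma Ak_compact {N : ℕ} {σ : Fin N → X → X} (hcont : ∀ i, Continuous (σ i))
    {k : ℕ} (i : Fin k → Fin N) : IsCompact (Ak σ i) := by
  rw [Ak, ← Set.image_univ]
  exact CompactSpace.isCompact_univ.image (compIFS_continuous hcont i)

lemma Ak_measurable {N : ℕ} {σ : Fin N → X → X} (hcont : ∀ i, Continuous (σ i))
    {k : ℕ} (i : Fin k → Fin N) : MeasurableSet (Ak σ i) :=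
  (Ak_compact hcont i).isClosed.measurableSet

lemma word_unique {N : ℕ} {σ : Fin N → X → X} (hno : NonOverlapping σ) {k : ℕ}
    {i i' : Fin k → Fin N} {x : X} (hx : x ∈ Ak σ i) (hx' : x ∈ Ak σ i') : i = i' := by
  by_contra h
  exact Set.disjoint_iff.mp (hno k i i' h) ⟨hx, hx'⟩

lemma exists_word {N : ℕ} {σ : Fin N → X → X} (hno : NonOverlapping σ) (x : X)
    (hG : ∀ k : ℕ, ∃ i : Fin k → Fin N, x ∈ Ak σ i) :
    ∃ s : ℕ → Fin N, ∀ k : ℕ, x ∈ Ak σ (fun j : Fin k => s j) := by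
  classical
  set w : ∀ k : ℕ, Fin k → Fin N := fun k => (hG k).choose with hw
  have hxw : ∀ k, x ∈ Ak σ (w k) := fun k => (hG k).choose_spec
  have hpre : ∀ k, (fun j : Fin k => w (k+1) j.castSucc) = w k := by
    intro k
    exact word_unique hno (Ak_subset σ (w (k+1)) (hxw (k+1))) (hxw k)
  refine ⟨fun n => w (n+1) ⟨n, n.lt_succ_self⟩, ?_⟩
  have key : ∀ k : ℕ, ∀ j : Fin k, w k j = w (j.val+1) ⟨j.val, j.val.lt_succ_self⟩ := by
    intro k
    induction k with
    | zero => exact fun j => j.elim0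
    | succ k ih =>
        intro j
        rcases lt_or_eq_of_le (Nat.lt_succ_iff.mp j.isLt) with h | h
        · have hj : j = Fin.castSucc ⟨j.val, h⟩ := by
            apply Fin.ext; rfl
          rw [hj, show w (k+1) (Fin.castSucc ⟨j.val, h⟩)
              = w k ⟨j.val, h⟩ from congrFun (hpre k) ⟨j.val, h⟩]
          exact ih ⟨j.val, h⟩
        · have hj : j = (⟨k, k.lt_succ_self⟩ : Fin (k+1)) := by
            apply Fin.ext; exact h
          rw [hj]
  intro k
  have : (fun j : Fin k => w (j.val+1) ⟨j.val, j.val.lt_succ_self⟩) = w k := by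
    funext j; exact (key k j).symm
  rw [show (fun j : Fin k => w (j.val+1) ⟨j.val, j.val.lt_succ_self⟩) = w k from this]
  exact hxw k

lemma spec_level {N : ℕ} {S : Fin N → H →L[ℂ] H} (hS : CuntzRep S)
    {σ : Fin N → X → X} (hcont : ∀ i, Continuous (σ i)) (hno : NonOverlapping σ)
    {g : H} {μ : Measure X} (hμ : IsSpectralMeasureX S σ g μ) {k : ℕ} (hk : 1 ≤ k) :
    μ ((⋃ i : Fin k → Fin N, Ak σ i)ᶜ) = 0 := by
  have hdisj : Pairwise (Function.onFun Disjoint fun i : Fin k → Fin N => Ak σ i) :=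
    fun i i' h => hno k i i' h
  have hmeas : ∀ i : Fin k → Fin N, MeasurableSet (Ak σ i) := fun i => Ak_measurable hcont i
  have hU : μ (⋃ i : Fin k → Fin N, Ak σ i) = μ Set.univ := by
    rw [measure_iUnion hdisj hmeas, tsum_fintype]
    have : ∀ i : Fin k → Fin N, μ (Ak σ i) = ENNReal.ofReal (‖adjoint (Sw S i) g‖ ^ 2) :=
      hμ.2 k hk
    rw [Finset.sum_congr rfl fun i _ => this i, ← ENNReal.ofReal_sum_of_nonneg
      (fun i _ => sq_nonneg _), sum_normsq_eq hS, hμ.1]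
  have hfin : μ Set.univ ≠ ⊤ := by rw [hμ.1]; exact ENNReal.ofReal_ne_top
  rw [measure_compl (MeasurableSet.iUnion hmeas) (by rw [hU]; exact hfin), hU]
  exact tsub_self _

/-- If `𝔄` is maximal abelian and `f` is a cyclic unit vector with spectral measure
`μ_f`, then every spectral measure `μ_g`, `g ∈ H`, is absolutely continuous with respect
to `μ_f`. -/
theorem stmt_15 {N : ℕ} (hN : 2 ≤ N) (S : Fin N → H →L[ℂ] H) (hS : CuntzRep S)
    (σ : Fin N → X → X) (hcont : ∀ i, Continuous (σ i))
    (hcomp : CompleteIFS σ) (hno : NonOverlapping σ)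
    (hmax : vN S = Set.centralizer (vN S))
    (f : H) (hf : ‖f‖ = 1)
    (hcyc : Dense ((fun A : H →L[ℂ] H => A f) '' vN S))
    (μf : Measure X) (hμf : IsSpectralMeasureX S σ f μf) :
    ∀ (g : H) (μg : Measure X), IsSpectralMeasureX S σ g μg → μg ≪ μf := by
  classical
  intro g μg hμg
  haveI : IsFiniteMeasure μf := ⟨by rw [hμf.1]; exact ENNReal.ofReal_lt_top⟩
  refine Measure.AbsolutelyContinuous.mk fun E hE hμfE => ?_
  -- the "good" set
  set G : Set X := ⋂ k : ℕ, ⋃ i : Fin (k+1) → Fin N, Ak σ i with hG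
  have hGc : μg Gᶜ = 0 := by
    rw [hG, Set.compl_iInter]
    refine measure_iUnion_null fun k => ?_
    exact spec_level hS hcont hno hμg (Nat.succ_le_succ (Nat.zero_le k))
  -- reduce to bounding μg (E ∩ G)
  suffices hEG : ∀ ε : ℝ, 0 < ε → μg (E ∩ G) ≤ ENNReal.ofReal (4 * ε ^ 2) by
    have hsplit : μg E ≤ μg (E ∩ G) := by
      calc μg E ≤ μg ((E ∩ G) ∪ Gᶜ) := by
            refine measure_mono fun x hx => ?_
            by_cases hxG : x ∈ G
            · exact Or.inl ⟨hx, hxG⟩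
            · exact Or.inr hxG
        _ ≤ μg (E ∩ G) + μg Gᶜ := measure_union_le _ _
        _ = μg (E ∩ G) := by rw [hGc, add_zero]
    have hlim : Filter.Tendsto (fun n : ℕ => ENNReal.ofReal (4 * (1 / (n + 1 : ℝ)) ^ 2))
        Filter.atTop (nhds 0) := by
      have h0 : Filter.Tendsto (fun n : ℕ => 4 * (1 / (n + 1 : ℝ)) ^ 2)
          Filter.atTop (nhds 0) := by
        have := (tendsto_one_div_add_atTop_nhds_zero_nat.pow 2).const_mul (4 : ℝ)
        simpa using this
      have := (ENNReal.continuous_ofReal.tendsto 0).comp h0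
      rw [ENNReal.ofReal_zero] at this; exact this
    have hle : ∀ n : ℕ, μg E ≤ ENNReal.ofReal (4 * (1 / (n + 1 : ℝ)) ^ 2) := by
      intro n
      exact hsplit.trans (hEG _ (by positivity))
    exact le_antisymm (ge_of_tendsto hlim (Filter.Eventually.of_forall hle)) (by positivity)
  intro ε hε
  -- choose an approximating element of the von Neumann algebra
  obtain ⟨y, hy, hdist⟩ := hcyc.exists_dist_lt g hε
  obtain ⟨B, hB, rfl⟩ := hy
  have hr : ‖g - B f‖ < ε := by rwa [dist_eq_norm] at hdist
  set r : H := g - B f with hrdef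
  -- choose an open set U ⊇ E of small μf-measure
  set δ : ℝ := ε ^ 2 / (‖B‖ ^ 2 + 1) with hδ
  have hδpos : 0 < δ := by positivity
  obtain ⟨U, hEU, hUopen, hUlt⟩ := Set.exists_isOpen_lt_of_lt E (ENNReal.ofReal δ)
    (by rw [hμfE]; exact ENNReal.ofReal_pos.mpr hδpos)
  -- the families of small sets inside U
  set T : ∀ k : ℕ, Finset (Fin (k+1) → Fin N) :=
    fun k => Finset.univ.filter (fun i => Ak σ i ⊆ U) with hT
  set V : ℕ → Set X := fun k => ⋃ i ∈ T k, Ak σ i with hV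
  -- membership in G gives words of every length
  have hGword : ∀ x ∈ G, ∀ k : ℕ, ∃ i : Fin k → Fin N, x ∈ Ak σ i := by
    intro x hx k
    cases k with
    | zero =>
        refine ⟨Fin.elim0, ?_⟩
        simp [Ak, compIFS]
    | succ k =>
        have := Set.mem_iInter.mp hx k
        exact Set.mem_iUnion.mp this
  -- covering E ∩ G by the V k
  have hcover : E ∩ G ⊆ ⋃ k : ℕ, (V k ∩ G) := by
    rintro x ⟨hxE, hxG⟩
    obtain ⟨s, hs⟩ := exists_word hno x (hGword x hxG)
    obtain ⟨ε', hε'pos, hball⟩ := Metric.isOpen_iff.mp hUopen x (hEU hxE)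
    have hdiam := hcomp s
    rw [Metric.tendsto_atTop] at hdiam
    obtain ⟨K, hK⟩ := hdiam ε' hε'pos
    have hdK : Metric.diam (Ak σ fun j : Fin (K+1) => s j) < ε' := by
      have := hK (K+1) (Nat.le_succ K)
      rw [Real.dist_eq, sub_zero] at this
      exact lt_of_le_of_lt (le_abs_self _) this
    have hsubU : Ak σ (fun j : Fin (K+1) => s j) ⊆ U := by
      intro y hy
      apply hball
      rw [Metric.mem_ball]
      calc dist y x ≤ Metric.diam (Ak σ fun j : Fin (K+1) => s j) :=
            Metric.dist_le_diam_of_mem (Ak_compact hcont _).isBounded hy (hs (K+1))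
        _ < ε' := hdK
    refine Set.mem_iUnion.mpr ⟨K, ?_, hxG⟩
    rw [hV]
    exact Set.mem_biUnion (Finset.mem_filter.mpr ⟨Finset.mem_univ _, hsubU⟩) (hs (K+1))
  -- monotonicity
  have hmono : Monotone fun k => V k ∩ G := by
    refine monotone_nat_of_le_succ fun k => ?_
    rintro x ⟨hxV, hxG⟩
    refine ⟨?_, hxG⟩
    obtain ⟨i, hiT, hxi⟩ := Set.mem_iUnion₂.mp hxV
    obtain ⟨i', hxi'⟩ := hGword x hxG (k+2)
    have hpre : (fun j : Fin (k+1) => i' j.castSucc) = i :=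
      word_unique hno (Ak_subset σ i' hxi') hxi
    have hiU : Ak σ i ⊆ U := (Finset.mem_filter.mp hiT).2
    have hsub : Ak σ i' ⊆ U := by
      refine fun y hy => hiU ?_
      rw [← hpre]
      exact Ak_subset σ i' hy
    exact Set.mem_biUnion (Finset.mem_filter.mpr ⟨Finset.mem_univ _, hsub⟩) hxi'
  -- the level-wise bound
  have hlevel : ∀ k : ℕ, μg (V k ∩ G) ≤ ENNReal.ofReal (4 * ε ^ 2) := by
    intro k
    have h1 : μg (V k ∩ G) ≤ ∑ i ∈ T k, μg (Ak σ i) :=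
      (measure_mono Set.inter_subset_left).trans (measure_biUnion_finset_le _ _)
    -- μf subtotal is small
    have hfsub : ∑ i ∈ T k, ‖adjoint (Sw S i) f‖ ^ 2 ≤ δ := by
      have hdisj : (↑(T k) : Set (Fin (k+1) → Fin N)).PairwiseDisjoint (fun i => Ak σ i) :=
        fun i _ i' _ h => hno (k+1) i i' h
      have hμfV : ∑ i ∈ T k, μf (Ak σ i) = μf (V k) :=
        (measure_biUnion_finset hdisj fun i _ => Ak_measurable hcont i).symm
      have hVU : μf (V k) ≤ μf U :=
        measure_mono (Set.iUnion₂_subset fun i hi => (Finset.mem_filter.mp hi).2)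
      have hsum : ENNReal.ofReal (∑ i ∈ T k, ‖adjoint (Sw S i) f‖ ^ 2)
          ≤ ENNReal.ofReal δ := by
        rw [ENNReal.ofReal_sum_of_nonneg fun i _ => sq_nonneg _]
        calc (∑ i ∈ T k, ENNReal.ofReal (‖adjoint (Sw S i) f‖ ^ 2))
            = ∑ i ∈ T k, μf (Ak σ i) := by
              refine Finset.sum_congr rfl fun i _ => ?_
              rw [hμf.2 (k+1) (Nat.succ_le_succ (Nat.zero_le k)) i]
          _ = μf (V k) := hμfV
          _ ≤ μf U := hVU
          _ ≤ ENNReal.ofReal δ := le_of_lt hUlt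
      have := (ENNReal.ofReal_le_ofReal_iff hδpos.le).mp hsum
      exact this
    -- the real estimate at level k
    have hreal : ∑ i ∈ T k, ‖adjoint (Sw S i) g‖ ^ 2 ≤ 4 * ε ^ 2 := by
      have hterm : ∀ i ∈ T k, ‖adjoint (Sw S i) g‖ ^ 2
          ≤ 2 * (‖B‖ ^ 2 * ‖adjoint (Sw S i) f‖ ^ 2) + 2 * ‖adjoint (Sw S i) r‖ ^ 2 := by
        intro i _
        have hle := norm_adj_Sw_le hS hmax (Nat.succ_le_succ (Nat.zero_le k)) i hB f g
        have h2 : ‖adjoint (Sw S i) g‖ ^ 2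
            ≤ (‖B‖ * ‖adjoint (Sw S i) f‖ + ‖adjoint (Sw S i) r‖) ^ 2 := by
          apply pow_le_pow_left₀ (norm_nonneg _)
          exact hle
          
        calc ‖adjoint (Sw S i) g‖ ^ 2
            ≤ (‖B‖ * ‖adjoint (Sw S i) f‖ + ‖adjoint (Sw S i) r‖) ^ 2 := h2
          _ ≤ 2 * (‖B‖ * ‖adjoint (Sw S i) f‖) ^ 2 + 2 * ‖adjoint (Sw S i) r‖ ^ 2 := by
              nlinarith [sq_nonneg (‖B‖ * ‖adjoint (Sw S i) f‖ - ‖adjoint (Sw S i) r‖)]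
          _ = 2 * (‖B‖ ^ 2 * ‖adjoint (Sw S i) f‖ ^ 2) + 2 * ‖adjoint (Sw S i) r‖ ^ 2 := by
              ring
      calc ∑ i ∈ T k, ‖adjoint (Sw S i) g‖ ^ 2
          ≤ ∑ i ∈ T k, (2 * (‖B‖ ^ 2 * ‖adjoint (Sw S i) f‖ ^ 2)
              + 2 * ‖adjoint (Sw S i) r‖ ^ 2) := Finset.sum_le_sum hterm
        _ = 2 * ‖B‖ ^ 2 * (∑ i ∈ T k, ‖adjoint (Sw S i) f‖ ^ 2)
              + 2 * (∑ i ∈ T k, ‖adjoint (Sw S i) r‖ ^ 2) := by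
            rw [Finset.sum_add_distrib, Finset.mul_sum, Finset.mul_sum]
            congr 1
            exact Finset.sum_congr rfl fun i _ => by ring
        _ ≤ 2 * ‖B‖ ^ 2 * δ + 2 * ε ^ 2 := by
            have hrsum : ∑ i ∈ T k, ‖adjoint (Sw S i) r‖ ^ 2 ≤ ε ^ 2 := by
              refine (sum_normsq_le hS (k+1) (T k) r).trans ?_
              have : ‖r‖ ^ 2 ≤ ε ^ 2 := by
                apply pow_le_pow_left₀ (norm_nonneg _) hr.le
              exact this
            have hfs : 0 ≤ (2 : ℝ) * ‖B‖ ^ 2 := by positivity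
            nlinarith [hfsub, hrsum]
        _ ≤ 4 * ε ^ 2 := by
            have : ‖B‖ ^ 2 * δ ≤ ε ^ 2 := by
              rw [hδ]
              rw [mul_div_assoc']
              rw [div_le_iff₀ (by positivity)]
              nlinarith [sq_nonneg ‖B‖, sq_nonneg ε]
            nlinarith
    calc μg (V k ∩ G) ≤ ∑ i ∈ T k, μg (Ak σ i) := h1
      _ = ENNReal.ofReal (∑ i ∈ T k, ‖adjoint (Sw S i) g‖ ^ 2) := by
          rw [ENNReal.ofReal_sum_of_nonneg fun i _ => sq_nonneg _]
          refine Finset.sum_congr rfl fun i _ => ?_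
          rw [hμg.2 (k+1) (Nat.succ_le_succ (Nat.zero_le k)) i]
      _ ≤ ENNReal.ofReal (4 * ε ^ 2) := ENNReal.ofReal_le_ofReal hreal
  -- put everything together
  calc μg (E ∩ G) ≤ μg (⋃ k : ℕ, V k ∩ G) := measure_mono hcover
    _ = ⨆ k : ℕ, μg (V k ∩ G) := Directed.measure_iUnion hmono.directed_le
    _ ≤ ENNReal.ofReal (4 * ε ^ 2) := iSup_le hlevel
end

section
/- Let N ≥ 2 and let m_0, …, m_{N−1} : 𝕋 → ℂ be essentially bounded measurable functions such that for almost every x ∈ 𝕋 the N×N complex matrix ((1/√N) · m_j(x + k/N))_{j,k=0}^{N−1} is unitary. Define S_j : L²(𝕋) → L²(𝕋) by (S_j f)(x) = m_j(x) · f(N x). Then each S_j is a bounded operator, indeed an isometry, and the family (S_j)_{j=0}^{N−1} satisfies the Cuntz relations: S_j^* S_k = δ_{jk}·I for all j, k, and ∑_{j=0}^{N−1} S_j S_j^* = I. -/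
open MeasureTheory ContinuousLinearMap AddCircle
open scoped InnerProductSpace
open ComplexConjugate

variable {H : Type*} [NormedAddCommGroup H] [InnerProductSpace ℂ H] [CompleteSpace H]

noncomputable section CuntzAuxAll

local notation "μ₁" => (haarAddCircle : Measure UnitAddCircle)




def cpt (N k : ℕ) : UnitAddCircle := (((k : ℝ) / (N : ℝ) : ℝ) : UnitAddCircle)

lemma cpt_add (N a b : ℕ) : cpt N (a + b) = cpt N a + cpt N b := by
  unfold cpt
  push_cast
  rw [add_div]
  norm_cast

lemma cpt_zero (N : ℕ) : cpt N 0 = 0 := by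
  unfold cpt; norm_num

lemma cpt_self (N : ℕ) : cpt N N = 0 := by
  rcases eq_or_ne N 0 with h | h
  · simp [h, cpt]
  · unfold cpt
    rw [div_self (by exact_mod_cast h)]
    exact coe_period 1

lemma nsmul_cpt (N k : ℕ) (hN : N ≠ 0) : N • cpt N k = 0 := by
  unfold cpt
  rw [← AddCircle.coe_nsmul]
  rw [nsmul_eq_mul, mul_div_cancel₀ _ (by exact_mod_cast hN : ((N:ℕ):ℝ) ≠ 0)]
  rw [AddCircle.coe_eq_zero_iff]
  exact ⟨k, by simp⟩

lemma nsmul_add_cpt (N k : ℕ) (hN : N ≠ 0) (x : UnitAddCircle) :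
    N • (x + cpt N k) = N • x := by
  rw [smul_add, nsmul_cpt N k hN, add_zero]

lemma measurePreserving_nsmul' {N : ℕ} (hN : N ≠ 0) :
    MeasurePreserving (fun x : UnitAddCircle => N • x) μ₁ μ₁ := by
  have h := MeasureTheory.Measure.measurePreserving_zsmul μ₁ (n := (N:ℤ))
    (by exact_mod_cast hN)
  simpa using h

lemma integral_rot (c : UnitAddCircle) (F : UnitAddCircle → ℂ) :
    ∫ x, F (x + c) ∂μ₁ = ∫ x, F x ∂μ₁ :=
  (measurePreserving_add_right μ₁ c).integral_comp
    (MeasurableEquiv.addRight c).measurableEmbedding F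

lemma fourier_add'' {T : ℝ} {n : ℤ} (x y : AddCircle T) :
    fourier n (x + y) = fourier n x * fourier n y := by
  simp [fourier_apply, smul_add, AddCircle.toCircle_add]

lemma fourier_nsmul' {n : ℤ} (N : ℕ) (x : UnitAddCircle) :
    fourier n ((N:ℕ) • x) = fourier (n * N) x := by
  rw [fourier_apply, fourier_apply, ← natCast_zsmul x (N:ℕ), smul_smul]

lemma fourier_mul_cpt_eq_one {N : ℕ} (hN : N ≠ 0) (q : ℤ) (k : ℕ) :
    fourier (q * N) (cpt N k) = 1 := by
  rw [fourier_apply]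
  unfold cpt
  rw [← AddCircle.coe_zsmul]
  have : ((q * N : ℤ) • ((k:ℝ)/(N:ℝ)) : ℝ) = ((q * k : ℤ) : ℝ) := by
    have hN0 : ((N:ℕ):ℝ) ≠ 0 := by exact_mod_cast hN
    push_cast
    field_simp
    rw [zsmul_eq_mul]; push_cast; field_simp
  rw [this]
  have h0 : (((q * k : ℤ) : ℝ) : UnitAddCircle) = 0 := by
    rw [AddCircle.coe_eq_zero_iff]
    exact ⟨q * k, by simp⟩
  rw [h0, AddCircle.toCircle_zero, Circle.coe_one]

lemma fourier_cpt_one_ne_one {N : ℕ} (hN : 2 ≤ N) {n : ℤ} (hn : ¬ ((N:ℤ) ∣ n)) :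
    fourier n (cpt N 1) ≠ 1 := by
  intro h
  apply hn
  rw [fourier_apply] at h
  have hc : (n • cpt N 1).toCircle = 1 := by
    ext
    simpa using h
  have h0 : n • cpt N 1 = 0 :=
    injective_toCircle one_ne_zero (by rw [hc, AddCircle.toCircle_zero])
  unfold cpt at h0
  rw [← AddCircle.coe_zsmul, AddCircle.coe_eq_zero_iff] at h0
  obtain ⟨z, hz⟩ := h0
  refine ⟨z, ?_⟩
  have hN0 : ((N:ℕ):ℝ) ≠ 0 := by positivity
  simp only [smul_eq_mul, zsmul_eq_mul, mul_one] at hz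
  have : (n : ℝ) = (N:ℝ) * (z:ℝ) := by
    push_cast at hz ⊢
    field_simp at hz
    linarith [hz]
  exact_mod_cast this





lemma integral_comp_nsmul {N : ℕ} (hN0 : N ≠ 0) {ψ : UnitAddCircle → ℂ}
    (hψ : AEStronglyMeasurable ψ μ₁) :
    ∫ x, ψ ((N:ℕ) • x) ∂μ₁ = ∫ x, ψ x ∂μ₁ := by
  have hD := measurePreserving_nsmul' hN0
  conv_rhs => rw [← hD.map_eq]
  exact (integral_map hD.measurable.aemeasurable (by rwa [hD.map_eq])).symm

lemma key_avg {N : ℕ} (hN0 : N ≠ 0) {φ ψ : UnitAddCircle → ℂ} {C : ℝ} {d : ℂ}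
    (hφm : AEStronglyMeasurable φ μ₁) (hφb : ∀ᵐ x ∂μ₁, ‖φ x‖ ≤ C)
    (hψ : Integrable ψ μ₁)
    (hsum : ∀ᵐ x ∂μ₁, ∑ l ∈ Finset.range N, φ (x + cpt N l) = d) :
    ∫ x, φ x * ψ ((N:ℕ) • x) ∂μ₁ = (d / N) * ∫ x, ψ x ∂μ₁ := by
  have hD := measurePreserving_nsmul' hN0
  have hψD : Integrable (fun x => ψ ((N:ℕ) • x)) μ₁ :=
    (hD.integrable_comp hψ.aestronglyMeasurable).mpr hψ
  have hF : Integrable (fun x => φ x * ψ ((N:ℕ) • x)) μ₁ :=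
    hψD.bdd_mul hφm hφb
  have hFl : ∀ l : ℕ, Integrable (fun x => φ (x + cpt N l) * ψ ((N:ℕ) • x)) μ₁ := by
    intro l
    have h1 : Integrable ((fun x => φ x * ψ ((N:ℕ) • x)) ∘ (fun x => x + cpt N l)) μ₁ :=
      ((measurePreserving_add_right μ₁ (cpt N l)).integrable_comp
        hF.aestronglyMeasurable).mpr hF
    simpa [Function.comp_def, nsmul_add_cpt N l hN0] using h1
  have hEq : ∀ l : ℕ, ∫ x, φ (x + cpt N l) * ψ ((N:ℕ) • x) ∂μ₁
      = ∫ x, φ x * ψ ((N:ℕ) • x) ∂μ₁ := by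
    intro l
    rw [← integral_rot (cpt N l) (fun x => φ x * ψ ((N:ℕ) • x))]
    congr 1
    funext x
    simp only [nsmul_add_cpt N l hN0]
  have hNI : (N : ℂ) * ∫ x, φ x * ψ ((N:ℕ) • x) ∂μ₁ = d * ∫ x, ψ x ∂μ₁ := by
    calc (N : ℂ) * ∫ x, φ x * ψ ((N:ℕ) • x) ∂μ₁
        = ∑ l ∈ Finset.range N, ∫ x, φ (x + cpt N l) * ψ ((N:ℕ) • x) ∂μ₁ := by
          simp only [hEq, Finset.sum_const, Finset.card_range, nsmul_eq_mul]
      _ = ∫ x, ∑ l ∈ Finset.range N, φ (x + cpt N l) * ψ ((N:ℕ) • x) ∂μ₁ :=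
          (integral_finset_sum _ fun l _ => hFl l).symm
      _ = ∫ x, d * ψ ((N:ℕ) • x) ∂μ₁ := by
          refine integral_congr_ae (hsum.mono fun x hx => ?_)
          dsimp only
          rw [← Finset.sum_mul, hx]
      _ = d * ∫ x, ψ ((N:ℕ) • x) ∂μ₁ := integral_const_mul d _
      _ = d * ∫ x, ψ x ∂μ₁ := by rw [integral_comp_nsmul hN0 hψ.aestronglyMeasurable]
  have hNc : (N : ℂ) ≠ 0 := by exact_mod_cast hN0
  field_simp
  linear_combination hNI




lemma norm_fourier_apply {T : ℝ} (n : ℤ) (x : AddCircle T) : ‖fourier n x‖ = 1 := by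
  rw [fourier_apply]
  exact Circle.norm_coe _

lemma ae_bound_of_memℒp_top {f : UnitAddCircle → ℂ} (h : MemLp f ⊤ μ₁) :
    ∃ C : ℝ, ∀ᵐ x ∂μ₁, ‖f x‖ ≤ C := by
  refine ⟨(eLpNorm f ⊤ μ₁).toReal, ?_⟩
  filter_upwards [ae_le_eLpNormEssSup (f := f) (μ := μ₁)] with x hx
  have h2 : eLpNorm f ⊤ μ₁ ≠ ⊤ := by
    rw [← lt_top_iff_ne_top]; exact h.2
  rw [eLpNorm_exponent_top] at h2
  calc ‖f x‖ = ((‖f x‖₊ : ENNReal)).toReal := by simp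
    _ ≤ (eLpNormEssSup f μ₁).toReal := ENNReal.toReal_mono h2 hx
    _ = (eLpNorm f ⊤ μ₁).toReal := by rw [eLpNorm_exponent_top]

lemma fourierCoeff_congr_ae' {f g : UnitAddCircle → ℂ} (h : f =ᵐ[μ₁] g) (n : ℤ) :
    fourierCoeff f n = fourierCoeff g n := by
  simp only [fourierCoeff]
  exact integral_congr_ae (h.mono fun x hx => by dsimp only; rw [hx])

lemma row_sum {N : ℕ} (hN0 : N ≠ 0) (m : Fin N → UnitAddCircle → ℂ)
    (hunitary : ∀ᵐ x ∂μ₁,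
      (Matrix.of fun j k : Fin N =>
          ((Real.sqrt N : ℂ))⁻¹ * m j (x + ((((k : ℕ) : ℝ) / (N : ℝ) : ℝ) : UnitAddCircle)))
        ∈ Matrix.unitaryGroup (Fin N) ℂ) (j k : Fin N) :
    ∀ᵐ x ∂μ₁, ∑ l ∈ Finset.range N, conj (m j (x + cpt N l)) * m k (x + cpt N l)
      = if j = k then (N:ℂ) else 0 := by
  have hNc : (N : ℂ) ≠ 0 := by exact_mod_cast hN0
  have hs : ((Real.sqrt N : ℂ))⁻¹ * ((Real.sqrt N : ℂ))⁻¹ = ((N:ℂ))⁻¹ := by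
    rw [← mul_inv, ← Complex.ofReal_mul, Real.mul_self_sqrt (Nat.cast_nonneg N)]
    push_cast
    ring
  have key : ∀ a b : ℂ, (N:ℂ) * (((Real.sqrt N : ℂ))⁻¹ * a * (conj (((Real.sqrt N : ℂ))⁻¹ * b)))
      = conj b * a := by
    intro a b
    rw [map_mul, map_inv₀, Complex.conj_ofReal]
    have h3 : (N:ℂ) * (((Real.sqrt N : ℂ))⁻¹ * a * (((Real.sqrt N : ℂ))⁻¹ * conj b))
        = ((N:ℂ) * (((Real.sqrt N : ℂ))⁻¹ * ((Real.sqrt N : ℂ))⁻¹)) * (conj b * a) := by ring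
    rw [h3, hs, mul_inv_cancel₀ hNc, one_mul]
  filter_upwards [hunitary] with x hx
  rw [Matrix.mem_unitaryGroup_iff] at hx
  set M : Matrix (Fin N) (Fin N) ℂ := Matrix.of fun j k : Fin N =>
      ((Real.sqrt N : ℂ))⁻¹ * m j (x + ((((k : ℕ) : ℝ) / (N : ℝ) : ℝ) : UnitAddCircle)) with hM
  have he : (M * star M) k j = (1 : Matrix (Fin N) (Fin N) ℂ) k j := by rw [hx]
  rw [Matrix.mul_apply, Matrix.one_apply] at he
  have he2 : (N:ℂ) * ∑ l : Fin N, M k l * (star M) l j = (N:ℂ) * (if k = j then 1 else 0) := by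
    rw [he]
  rw [Finset.mul_sum] at he2
  have hterm : ∀ l : Fin N, (N:ℂ) * (M k l * (star M) l j)
      = conj (m j (x + cpt N (l:ℕ))) * m k (x + cpt N (l:ℕ)) := by
    intro l
    rw [Matrix.star_apply, hM]
    simp only [Matrix.of_apply]
    exact key _ _
  rw [Finset.sum_congr rfl fun l _ => hterm l] at he2
  rw [← Fin.sum_univ_eq_sum_range
    (fun l : ℕ => conj (m j (x + cpt N l)) * m k (x + cpt N l)) N]
  rw [he2]
  by_cases hjk : j = k
  · simp [hjk]
  · simp [hjk, Ne.symm hjk]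





variable {N : ℕ} (m : Fin N → UnitAddCircle → ℂ)

lemma smem (hm : ∀ j, MemLp (m j) ⊤ μ₁) (hN0 : N ≠ 0) (j : Fin N) (f : Lp ℂ 2 μ₁) :
    MemLp (fun x => m j x * (f : UnitAddCircle → ℂ) ((N:ℕ) • x)) 2 μ₁ := by
  have h1 : MemLp ((f : UnitAddCircle → ℂ) ∘ fun x => (N:ℕ) • x) 2 μ₁ :=
    (Lp.memLp f).comp_measurePreserving (measurePreserving_nsmul' hN0)
  have h2 := h1.smul (r := 2) (hm j)
  exact h2

lemma ae_comp_nsmul (hN0 : N ≠ 0) {u v : UnitAddCircle → ℂ} (h : u =ᵐ[μ₁] v) :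
    (fun x => u ((N:ℕ) • x)) =ᵐ[μ₁] (fun x => v ((N:ℕ) • x)) :=
  (measurePreserving_nsmul' hN0).quasiMeasurePreserving.ae_eq_comp h

/-- The operator `S_j` as a linear map. -/
def Sl (hm : ∀ j, MemLp (m j) ⊤ μ₁) (hN0 : N ≠ 0) (j : Fin N) :
    Lp ℂ 2 μ₁ →ₗ[ℂ] Lp ℂ 2 μ₁ where
  toFun f := (smem m hm hN0 j f).toLp _
  map_add' f g := by
    rw [← MemLp.toLp_add (smem m hm hN0 j f) (smem m hm hN0 j g)]
    apply MemLp.toLp_congr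
    filter_upwards [ae_comp_nsmul hN0 (Lp.coeFn_add f g)] with x hx
    rw [hx]
    simp [mul_add]
  map_smul' c f := by
    simp only [RingHom.id_apply]
    rw [← MemLp.toLp_const_smul c (smem m hm hN0 j f)]
    apply MemLp.toLp_congr
    filter_upwards [ae_comp_nsmul hN0 (Lp.coeFn_smul c f)] with x hx
    rw [hx]
    simp [smul_eq_mul]
    ring

lemma Sl_ae (hm : ∀ j, MemLp (m j) ⊤ μ₁) (hN0 : N ≠ 0) (j : Fin N) (f : Lp ℂ 2 μ₁) :
    ⇑(Sl m hm hN0 j f) =ᵐ[μ₁] fun x => m j x * (f : UnitAddCircle → ℂ) ((N:ℕ) • x) :=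
  (smem m hm hN0 j f).coeFn_toLp

lemma inner_Sl (hm : ∀ j, MemLp (m j) ⊤ μ₁) (hN0 : N ≠ 0)
    (hunitary : ∀ᵐ x ∂μ₁,
      (Matrix.of fun j k : Fin N =>
          ((Real.sqrt N : ℂ))⁻¹ * m j (x + ((((k : ℕ) : ℝ) / (N : ℝ) : ℝ) : UnitAddCircle)))
        ∈ Matrix.unitaryGroup (Fin N) ℂ)
    (j k : Fin N) (f g : Lp ℂ 2 μ₁) :
    ⟪Sl m hm hN0 j f, Sl m hm hN0 k g⟫_ℂ = if j = k then ⟪f, g⟫_ℂ else 0 := by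
  obtain ⟨Cj, hCj⟩ := ae_bound_of_memℒp_top (hm j)
  obtain ⟨Ck, hCk⟩ := ae_bound_of_memℒp_top (hm k)
  simp only [L2.inner_def, RCLike.inner_apply]
  have h1 : (∫ x, conj ((Sl m hm hN0 j f) x) * ((Sl m hm hN0 k g) x) ∂μ₁)
      = ∫ x, (fun y => conj (m j y) * m k y) x
          * ((fun y => conj ((f : UnitAddCircle → ℂ) y) * (g : UnitAddCircle → ℂ) y)
              ((N:ℕ) • x)) ∂μ₁ := by
    refine integral_congr_ae ?_
    filter_upwards [Sl_ae m hm hN0 j f, Sl_ae m hm hN0 k g] with x ha hb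
    rw [ha, hb]
    rw [map_mul]
    ring
  have hφm : AEStronglyMeasurable (fun y => conj (m j y) * m k y) μ₁ :=
    (RCLike.continuous_conj.comp_aestronglyMeasurable (hm j).1).mul (hm k).1
  have hφb : ∀ᵐ x ∂μ₁, ‖conj (m j x) * m k x‖ ≤ Cj * Ck := by
    filter_upwards [hCj, hCk] with x h1 h2
    rw [norm_mul, RCLike.norm_conj]
    exact mul_le_mul h1 h2 (norm_nonneg _) ((norm_nonneg _).trans h1)
  have hψ : Integrable (fun y => conj ((f : UnitAddCircle → ℂ) y)
      * (g : UnitAddCircle → ℂ) y) μ₁ := by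
    exact (by simpa [RCLike.inner_apply] using L2.integrable_inner (𝕜 := ℂ) f g :
      Integrable (fun y => (g : UnitAddCircle → ℂ) y * conj ((f : UnitAddCircle → ℂ) y)) μ₁).congr
      (Filter.Eventually.of_forall fun x => mul_comm _ _)
  have hc : ∀ u v : UnitAddCircle → ℂ, ∫ a, u a * conj (v a) ∂μ₁ = ∫ a, conj (v a) * u a ∂μ₁ :=
    fun u v => integral_congr_ae (Filter.Eventually.of_forall fun a => mul_comm _ _)
  rw [hc, hc]
  rw [h1, key_avg hN0 hφm hφb hψ (row_sum hN0 m hunitary j k)]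
  by_cases hjk : j = k
  · simp only [hjk, if_true]
    rw [div_self (by exact_mod_cast hN0 : (N:ℂ) ≠ 0), one_mul]
  · simp [hjk]

lemma norm_Sl (hm : ∀ j, MemLp (m j) ⊤ μ₁) (hN0 : N ≠ 0)
    (hunitary : ∀ᵐ x ∂μ₁,
      (Matrix.of fun j k : Fin N =>
          ((Real.sqrt N : ℂ))⁻¹ * m j (x + ((((k : ℕ) : ℝ) / (N : ℝ) : ℝ) : UnitAddCircle)))
        ∈ Matrix.unitaryGroup (Fin N) ℂ)
    (j : Fin N) (f : Lp ℂ 2 μ₁) : ‖Sl m hm hN0 j f‖ = ‖f‖ := by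
  have h := inner_Sl m hm hN0 hunitary j j f f
  simp only [if_true] at h
  rw [inner_self_eq_norm_sq_to_K, inner_self_eq_norm_sq_to_K] at h
  have h2 : ‖Sl m hm hN0 j f‖ ^ 2 = ‖f‖ ^ 2 := by exact_mod_cast h
  nlinarith [norm_nonneg (Sl m hm hN0 j f), norm_nonneg f]





variable {N : ℕ} {m : Fin N → UnitAddCircle → ℂ}

lemma conj_memtop (hm : ∀ j, MemLp (m j) ⊤ μ₁) (j : Fin N) :
    MemLp (fun x => conj (m j x)) ⊤ μ₁ :=
  ⟨RCLike.continuous_conj.comp_aestronglyMeasurable (hm j).1, by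
    rw [eLpNorm_exponent_top] at *
    simpa [eLpNormEssSup] using (hm j).2⟩

lemma ortho_zero (hN : 2 ≤ N) (hm : ∀ j, MemLp (m j) ⊤ μ₁)
    (hunitary : ∀ᵐ x ∂μ₁,
      (Matrix.of fun j k : Fin N =>
          ((Real.sqrt N : ℂ))⁻¹ * m j (x + ((((k : ℕ) : ℝ) / (N : ℝ) : ℝ) : UnitAddCircle)))
        ∈ Matrix.unitaryGroup (Fin N) ℂ)
    (h : Lp ℂ 2 μ₁)
    (hI : ∀ (j : Fin N) (q : ℤ),
      ∫ x, fourier (-(q * N)) x * (conj (m j x) * (h : UnitAddCircle → ℂ) x) ∂μ₁ = 0) :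
    h = 0 := by
  have hN0 : N ≠ 0 := by omega
  set w : Fin N → UnitAddCircle → ℂ :=
    fun j x => conj (m j x) * (h : UnitAddCircle → ℂ) x with hw_def
  have hw : ∀ j, MemLp (w j) 2 μ₁ := by
    intro j
    have h2 := (Lp.memLp h).smul (r := 2) (conj_memtop hm j)
    exact h2
  have hwrot : ∀ (j : Fin N) (l : ℕ), MemLp (fun x => w j (x + cpt N l)) 2 μ₁ := by
    intro j l
    exact (hw j).comp_measurePreserving (measurePreserving_add_right μ₁ (cpt N l))
  set v : Fin N → UnitAddCircle → ℂ :=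
    fun j x => ∑ l ∈ Finset.range N, w j (x + cpt N l) with hv_def
  have hv : ∀ j, MemLp (v j) 2 μ₁ := fun j =>
    memLp_finset_sum (Finset.range N) fun l _ => hwrot j l
  -- periodicity of v
  have hper : ∀ (j : Fin N) (x : UnitAddCircle), v j (x + cpt N 1) = v j x := by
    intro j x
    set G : ℕ → ℂ := fun t => w j (x + cpt N t) with hG
    have e1 : ∀ l : ℕ, v j (x + cpt N 1) = ∑ l ∈ Finset.range N, G (l + 1) := by
      intro _
      refine Finset.sum_congr rfl fun l _ => ?_
      rw [add_assoc, ← cpt_add, add_comm 1 l]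
    have hGN : G N = G 0 := by simp only [hG, cpt_self, cpt_zero]
    have key : (∑ l ∈ Finset.range N, G (l + 1)) + G 0
        = (∑ l ∈ Finset.range N, G l) + G N :=
      (Finset.sum_range_succ' G N).symm.trans (Finset.sum_range_succ G N)
    rw [hGN] at key
    have := add_right_cancel key
    rw [e1 0, this]
  -- integrability of the integrands below
  have hwint : ∀ (j : Fin N) (l : ℕ), Integrable (fun x => w j (x + cpt N l)) μ₁ :=
    fun j l => (hwrot j l).integrable one_le_two
  have hterm_int : ∀ (n : ℤ) (j : Fin N) (l : ℕ),
      Integrable (fun x => fourier (-n) x * w j (x + cpt N l)) μ₁ := by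
    intro n j l
    exact (hwint j l).bdd_mul (c := 1)
      (Continuous.aestronglyMeasurable (map_continuous (fourier (-n))))
      (Filter.Eventually.of_forall fun x => (norm_fourier_apply _ _).le)
  have hvint : ∀ (n : ℤ) (j : Fin N),
      Integrable (fun x => fourier (-n) x * v j x) μ₁ := by
    intro n j
    have := ((hv j).integrable one_le_two).bdd_mul (c := 1)
      (Continuous.aestronglyMeasurable (map_continuous (fourier (-n))))
      (Filter.Eventually.of_forall fun x => (norm_fourier_apply _ _).le)
    exact this
  -- all Fourier coefficients of v j vanish
  have hcoeff : ∀ (j : Fin N) (n : ℤ), fourierCoeff (v j) n = 0 := by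
    intro j n
    by_cases hdvd : (N : ℤ) ∣ n
    · obtain ⟨q, rfl⟩ := hdvd
      have step1 : fourierCoeff (v j) ((N:ℤ) * q)
          = ∑ l ∈ Finset.range N, ∫ x, fourier (-((N:ℤ) * q)) x * w j (x + cpt N l) ∂μ₁ := by
        rw [fourierCoeff, ← integral_finset_sum _ fun l _ => hterm_int ((N:ℤ)*q) j l]
        congr 1
        funext x
        rw [smul_eq_mul, hv_def, Finset.mul_sum]
      have step2 : ∀ l ∈ Finset.range N,
          ∫ x, fourier (-((N:ℤ) * q)) x * w j (x + cpt N l) ∂μ₁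
            = ∫ x, fourier (-((N:ℤ) * q)) x * w j x ∂μ₁ := by
        intro l hl
        have hlN : l < N := Finset.mem_range.mp hl
        rw [← integral_rot (cpt N (N - l)) (fun x => fourier (-((N:ℤ) * q)) x * w j (x + cpt N l))]
        congr 1
        funext x
        have h3 : x + cpt N (N - l) + cpt N l = x := by
          rw [add_assoc, ← cpt_add, Nat.sub_add_cancel hlN.le, cpt_self, add_zero]
        rw [h3, fourier_add'']
        have h4 : (-((N:ℤ) * q)) = (-q) * (N:ℕ) := by ring
        have h5 : fourier (-((N:ℤ) * q)) (cpt N (N - l)) = 1 := by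
          rw [h4]; exact fourier_mul_cpt_eq_one hN0 (-q) (N - l)
        rw [h5, mul_one]
      have step3 : ∫ x, fourier (-((N:ℤ) * q)) x * w j x ∂μ₁ = 0 := by
        have h6 : (-((N:ℤ) * q)) = (-(q * N)) := by ring
        rw [h6]
        exact hI j q
      rw [step1, Finset.sum_congr rfl step2, step3]
      simp
    · have hroteq : fourierCoeff (v j) n = fourier (-n) (cpt N 1) * fourierCoeff (v j) n := by
        rw [fourierCoeff]
        conv_lhs => rw [← integral_rot (cpt N 1) (fun x => fourier (-n) x • v j x)]
        rw [← integral_const_mul]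
        refine integral_congr_ae (Filter.Eventually.of_forall fun x => ?_)
        dsimp only
        rw [hper j x, fourier_add'', smul_eq_mul, smul_eq_mul]
        ring
      have hne : fourier (-n) (cpt N 1) ≠ 1 := by
        apply fourier_cpt_one_ne_one hN
        rwa [dvd_neg]
      have h5 : (1 - fourier (-n) (cpt N 1)) * fourierCoeff (v j) n = 0 := by
        linear_combination hroteq
      rcases mul_eq_zero.mp h5 with h6 | h6
      · exact absurd (sub_eq_zero.mp h6).symm hne
      · exact h6
  -- hence v j vanishes a.e.
  have hv0 : ∀ j : Fin N, v j =ᵐ[μ₁] 0 := by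
    intro j
    set V : Lp ℂ 2 μ₁ := (hv j).toLp (v j) with hV_def
    have hrepr : fourierBasis.repr V = 0 := by
      ext i
      have h7 : fourierCoeff (⇑V) i = 0 :=
        (fourierCoeff_congr_ae' ((hv j).coeFn_toLp) i).trans (hcoeff j i)
      rw [fourierBasis_repr]
      simpa using h7
    have hV : V = 0 := by
      have := fourierBasis.repr.map_eq_zero_iff.mp hrepr
      exact this
    calc v j =ᵐ[μ₁] ⇑V := ((hv j).coeFn_toLp).symm
      _ =ᵐ[μ₁] 0 := by rw [hV]; exact Lp.coeFn_zero ℂ 2 μ₁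
  -- pointwise matrix argument
  have hae : ⇑h =ᵐ[μ₁] 0 := by
    have hall : ∀ᵐ x ∂μ₁, ∀ j : Fin N, v j x = 0 :=
      (ae_all_iff).mpr fun j => (hv0 j).mono fun x hx => by simpa using hx
    filter_upwards [hall, hunitary] with x hx hU
    set M : Matrix (Fin N) (Fin N) ℂ := Matrix.of fun j k : Fin N =>
        ((Real.sqrt N : ℂ))⁻¹ * m j (x + ((((k : ℕ) : ℝ) / (N : ℝ) : ℝ) : UnitAddCircle)) with hM
    set u : Fin N → ℂ := fun k => conj ((h : UnitAddCircle → ℂ) (x + cpt N (k:ℕ))) with hu_def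
    have hMu : M.mulVec u = 0 := by
      funext j'
      have hfin : v j' x = ∑ k : Fin N, w j' (x + cpt N (k:ℕ)) := by
        rw [hv_def]
        exact (Fin.sum_univ_eq_sum_range (fun l => w j' (x + cpt N l)) N).symm
      have : M.mulVec u j' = ((Real.sqrt N : ℂ))⁻¹ * conj (v j' x) := by
        rw [Matrix.mulVec, dotProduct, hfin, map_sum, Finset.mul_sum]
        refine Finset.sum_congr rfl fun k _ => ?_
        rw [hM]
        simp only [Matrix.of_apply, hu_def, hw_def]
        rw [map_mul, Complex.conj_conj]
        show ((Real.sqrt N : ℂ))⁻¹ * m j' (x + cpt N (k:ℕ)) * conj ((h : UnitAddCircle → ℂ) (x + cpt N (k:ℕ)))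
          = ((Real.sqrt N : ℂ))⁻¹ * (m j' (x + cpt N (k:ℕ)) * conj ((h : UnitAddCircle → ℂ) (x + cpt N (k:ℕ))))
        ring
      rw [this, hx j', map_zero, mul_zero]
      rfl
    have hu : u = 0 := by
      have h1 : star M * M = 1 := Matrix.mem_unitaryGroup_iff'.mp hU
      calc u = (1 : Matrix (Fin N) (Fin N) ℂ).mulVec u := (Matrix.one_mulVec u).symm
        _ = (star M * M).mulVec u := by rw [h1]
        _ = (star M).mulVec (M.mulVec u) := (Matrix.mulVec_mulVec u (star M) M).symm
        _ = 0 := by rw [hMu, Matrix.mulVec_zero]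
    have h8 := congrFun hu (⟨0, by omega⟩ : Fin N)
    simp only [hu_def, Pi.zero_apply] at h8
    have h9 : (h : UnitAddCircle → ℂ) (x + cpt N 0) = 0 := by
      have := congrArg conj h8
      simpa using this
    rw [cpt_zero, add_zero] at h9
    simpa using h9
  exact Lp.ext (hae.trans (Lp.coeFn_zero ℂ 2 μ₁).symm)





variable {N : ℕ} {m : Fin N → UnitAddCircle → ℂ}

/-- The operator `S_j` as a continuous linear map. -/
def Sc (hm : ∀ j, MemLp (m j) ⊤ μ₁) (hN0 : N ≠ 0)
    (hunitary : ∀ᵐ x ∂μ₁,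
      (Matrix.of fun j k : Fin N =>
          ((Real.sqrt N : ℂ))⁻¹ * m j (x + ((((k : ℕ) : ℝ) / (N : ℝ) : ℝ) : UnitAddCircle)))
        ∈ Matrix.unitaryGroup (Fin N) ℂ) (j : Fin N) :
    Lp ℂ 2 μ₁ →L[ℂ] Lp ℂ 2 μ₁ :=
  LinearMap.mkContinuous (Sl m hm hN0 j) 1 fun f => by
    rw [norm_Sl m hm hN0 hunitary j f, one_mul]

variable (hm : ∀ j, MemLp (m j) ⊤ μ₁) (hN0 : N ≠ 0)
    (hunitary : ∀ᵐ x ∂μ₁,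
      (Matrix.of fun j k : Fin N =>
          ((Real.sqrt N : ℂ))⁻¹ * m j (x + ((((k : ℕ) : ℝ) / (N : ℝ) : ℝ) : UnitAddCircle)))
        ∈ Matrix.unitaryGroup (Fin N) ℂ)

lemma Sc_apply (j : Fin N) (f : Lp ℂ 2 μ₁) :
    Sc hm hN0 hunitary j f = Sl m hm hN0 j f := rfl

lemma inner_Sc (j k : Fin N) (f g : Lp ℂ 2 μ₁) :
    ⟪Sc hm hN0 hunitary j f, Sc hm hN0 hunitary k g⟫_ℂ = if j = k then ⟪f, g⟫_ℂ else 0 :=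
  inner_Sl m hm hN0 hunitary j k f g

lemma cuntz1 (j k : Fin N) :
    adjoint (Sc hm hN0 hunitary j) ∘L Sc hm hN0 hunitary k
      = if j = k then 1 else 0 := by
  refine ContinuousLinearMap.ext fun f => ?_
  refine ext_inner_right ℂ fun g => ?_
  rw [ContinuousLinearMap.comp_apply, adjoint_inner_left]
  rw [inner_Sc hm hN0 hunitary k j f g]
  by_cases h : j = k
  · subst h; simp
  · simp [h, Ne.symm h]

lemma cuntz2 (hN : 2 ≤ N) :
    ∑ j : Fin N, Sc hm hN0 hunitary j ∘L adjoint (Sc hm hN0 hunitary j) = 1 := by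
  refine ContinuousLinearMap.ext fun f => ?_
  rw [ContinuousLinearMap.sum_apply, ContinuousLinearMap.one_apply]
  set S := Sc hm hN0 hunitary with hS
  set h0 : Lp ℂ 2 μ₁ := f - ∑ j : Fin N, (S j ∘L adjoint (S j)) f with hh0
  have hinner0 : ∀ (j : Fin N) (g : Lp ℂ 2 μ₁), ⟪S j g, h0⟫_ℂ = 0 := by
    intro j g
    rw [hh0, inner_sub_right]
    have hsum : ⟪S j g, ∑ k : Fin N, (S k ∘L adjoint (S k)) f⟫_ℂ = ⟪S j g, f⟫_ℂ := by
      rw [inner_sum]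
      have hterm : ∀ k : Fin N, ⟪S j g, (S k ∘L adjoint (S k)) f⟫_ℂ
          = if j = k then ⟪g, adjoint (S k) f⟫_ℂ else 0 := by
        intro k
        rw [ContinuousLinearMap.comp_apply]
        exact inner_Sc hm hN0 hunitary j k g (adjoint (S k) f)
      rw [Finset.sum_congr rfl fun k _ => hterm k]
      rw [Finset.sum_ite_eq (Finset.univ : Finset (Fin N)) j
        (fun k => ⟪g, adjoint (S k) f⟫_ℂ)]
      rw [if_pos (Finset.mem_univ j)]
      rw [adjoint_inner_right]
    rw [hsum, sub_self]
  have hIc : ∀ (j : Fin N) (q : ℤ),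
      ∫ x, fourier (-(q * N)) x * (conj (m j x) * (h0 : UnitAddCircle → ℂ) x) ∂μ₁ = 0 := by
    intro j q
    have h1 := hinner0 j (fourierLp 2 q)
    rw [L2.inner_def] at h1
    simp only [RCLike.inner_apply] at h1
    rw [← h1]
    refine integral_congr_ae ?_
    have ha0 : ⇑(S j (fourierLp 2 q)) =ᵐ[μ₁]
        fun x => m j x * (fourierLp 2 q : UnitAddCircle → ℂ) ((N:ℕ) • x) :=
      Sl_ae m hm hN0 j (fourierLp 2 q)
    have hb0 : (fun x => (fourierLp 2 q : UnitAddCircle → ℂ) ((N:ℕ) • x))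
        =ᵐ[μ₁] (fun x => fourier q ((N:ℕ) • x)) :=
      ae_comp_nsmul hN0 (coeFn_fourierLp 2 q)
    filter_upwards [ha0, hb0] with x ha hb
    rw [ha, hb]
    rw [map_mul, fourier_nsmul', ← fourier_neg]
    ring
  have hzero : h0 = 0 := ortho_zero hN hm hunitary h0 hIc
  have h2 : f - ∑ j : Fin N, (S j ∘L adjoint (S j)) f = 0 := by
    rw [← hh0]; exact hzero
  exact (sub_eq_zero.mp h2).symm


end CuntzAuxAll

/-- Given essentially bounded filters `m_0, …, m_{N-1}` on the circle whose associated
`N×N` matrix is a.e. unitary, the operators `(S_j f)(x) = m_j(x) f(Nx)` are well-defined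
bounded isometries on `L²(𝕋)` satisfying the Cuntz relations. -/
theorem stmt_16 {N : ℕ} (hN : 2 ≤ N) (m : Fin N → UnitAddCircle → ℂ)
    (hm : ∀ j, MemLp (m j) ⊤ (haarAddCircle : Measure UnitAddCircle))
    (hunitary : ∀ᵐ x ∂(haarAddCircle : Measure UnitAddCircle),
      (Matrix.of fun j k : Fin N =>
          ((Real.sqrt N : ℂ))⁻¹ * m j (x + ((((k : ℕ) : ℝ) / (N : ℝ) : ℝ) : UnitAddCircle)))
        ∈ Matrix.unitaryGroup (Fin N) ℂ) :
    ∃ S : Fin N →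
        (Lp ℂ 2 (haarAddCircle : Measure UnitAddCircle) →L[ℂ]
          Lp ℂ 2 (haarAddCircle : Measure UnitAddCircle)),
      (∀ (j : Fin N) (g : Lp ℂ 2 (haarAddCircle : Measure UnitAddCircle)),
        ⇑(S j g) =ᵐ[(haarAddCircle : Measure UnitAddCircle)]
          fun x => m j x * g (N • x)) ∧
      (∀ j : Fin N, Isometry (S j)) ∧ CuntzRep S := by
  have hN0 : N ≠ 0 := by omega
  refine ⟨Sc hm hN0 hunitary, fun j g => Sl_ae m hm hN0 j g, fun j =>
    AddMonoidHomClass.isometry_of_norm (Sc hm hN0 hunitary j) (norm_Sl m hm hN0 hunitary j),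
    cuntz1 hm hN0 hunitary, cuntz2 hm hN0 hunitary hN⟩
end

section
/- Define S_0, S_1 : L²(𝕋) → L²(𝕋) by (S_0 f)(x) = f(2x) and (S_1 f)(x) = e_1(x) · f(2x); this pair is a representation of 𝒪_2 on L²(𝕋). Then for every k ≥ 1 and every α = (α_1, …, α_k) ∈ {0,1}^k, the range of the projection S_α S_α^* = S_{α_1}⋯S_{α_k}S_{α_k}^*⋯S_{α_1}^* equals the closed linear span of {e_n : n ∈ ℤ, n ≡ α_1 + 2α_2 + ⋯ + 2^{k−1}α_k (mod 2^k)}. -/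
open MeasureTheory ContinuousLinearMap AddCircle
open scoped InnerProductSpace

variable {H : Type*} [NormedAddCommGroup H] [InnerProductSpace ℂ H] [CompleteSpace H]

namespace Stmt19Aux

noncomputable abbrev L2C := Lp ℂ 2 (haarAddCircle : Measure UnitAddCircle)

noncomputable def e (n : ℤ) : L2C := fourierLp 2 n

lemma inner_e (m n : ℤ) : ⟪e m, e n⟫_ℂ = if m = n then 1 else 0 :=
  orthonormal_iff_ite.mp (orthonormal_fourier (T := 1)) m n

lemma spanK : (Submodule.span ℂ (Set.range (e : ℤ → L2C))).topologicalClosure = ⊤ :=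
  span_fourierLp_closure_eq_top (T := 1) (p := 2) (by norm_num)

lemma inner_all_zero {x : L2C} (h : ∀ m : ℤ, ⟪e m, x⟫_ℂ = 0) : x = 0 := by
  have horth : (Submodule.span ℂ (Set.range (e : ℤ → L2C)))ᗮ = ⊥ :=
    Submodule.topologicalClosure_eq_top_iff.mp spanK
  have hx : x ∈ (Submodule.span ℂ (Set.range (e : ℤ → L2C)))ᗮ := by
    rw [Submodule.mem_orthogonal]
    intro u hu
    induction hu using Submodule.span_induction with
    | mem u hu => obtain ⟨m, rfl⟩ := hu; exact h m
    | zero => exact inner_zero_left x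
    | add u v _ _ hu hv => rw [inner_add_left, hu, hv, add_zero]
    | smul c u _ hu => rw [inner_smul_left, hu, mul_zero]
  rw [horth] at hx
  simpa using hx

lemma ext_vec {u v : L2C} (h : ∀ m : ℤ, ⟪e m, u⟫_ℂ = ⟪e m, v⟫_ℂ) : u = v := by
  have h0 : u - v = 0 := inner_all_zero fun m => by
    rw [inner_sub_right, h m, sub_self]
  exact sub_eq_zero.mp h0

lemma ext_clm {A B : L2C →L[ℂ] L2C} (h : ∀ n : ℤ, A (e n) = B (e n)) : A = B := by
  have hd : Dense ((Submodule.span ℂ (Set.range (e : ℤ → L2C))) : Set L2C) := by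
    rw [Submodule.dense_iff_topologicalClosure_eq_top]
    exact spanK
  refine ContinuousLinearMap.ext_on hd ?_
  rintro x ⟨n, rfl⟩
  exact h n

lemma modeq_iff {k : ℕ} (n wv : ℤ) : n ≡ wv [ZMOD (2 ^ k)] ↔ ((2:ℤ) ^ k) ∣ n - wv := by
  rw [Int.modEq_iff_dvd, dvd_sub_comm]

lemma mp2 : MeasurePreserving (fun x : UnitAddCircle => 2 • x)
    (haarAddCircle) (haarAddCircle) := by
  have h := Measure.measurePreserving_zsmul (haarAddCircle : Measure UnitAddCircle)
    (n := 2) (by norm_num)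
  convert h using 2 with x
  rw [two_nsmul, two_zsmul]

lemma fourier_two_smul (n : ℤ) (x : UnitAddCircle) :
    fourier n (2 • x) = fourier (2 * n) x := by
  rw [two_nsmul, show 2 * n = n + n from two_mul n, fourier_add, fourier_apply, smul_add,
    toCircle_add]
  norm_cast

lemma e_comp_double (n : ℤ) :
    (fun x : UnitAddCircle => (e n : L2C) (2 • x))
      =ᵐ[(haarAddCircle : Measure UnitAddCircle)] ⇑(fourier (2 * n)) := by
  have hc := mp2.quasiMeasurePreserving.ae_eq_comp (coeFn_fourierLp (T := 1) 2 n)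
  refine hc.trans (Filter.Eventually.of_forall fun x => ?_)
  exact fourier_two_smul n x

variable (S : Fin 2 → L2C →L[ℂ] L2C)

lemma S0_apply
    (hform0 : ∀ g : L2C, ⇑(S 0 g) =ᵐ[(haarAddCircle : Measure UnitAddCircle)]
      fun x => g (2 • x)) (n : ℤ) : S 0 (e n) = e (2 * n) := by
  apply Lp.ext
  refine (hform0 (e n)).trans ?_
  refine (e_comp_double n).trans ?_
  exact (coeFn_fourierLp (T := 1) 2 (2 * n)).symm

lemma S1_apply
    (hform1 : ∀ g : L2C, ⇑(S 1 g) =ᵐ[(haarAddCircle : Measure UnitAddCircle)]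
      fun x => fourier 1 x * g (2 • x)) (n : ℤ) : S 1 (e n) = e (2 * n + 1) := by
  apply Lp.ext
  refine (hform1 (e n)).trans ?_
  have h1 : (fun x : UnitAddCircle => fourier 1 x * (e n : L2C) (2 • x))
      =ᵐ[(haarAddCircle : Measure UnitAddCircle)] ⇑(fourier (2 * n + 1)) := by
    refine ((e_comp_double n).mono fun x hx => ?_)
    simp only [hx]
    rw [show (2 * n + 1 : ℤ) = 1 + 2 * n by ring, fourier_add]
  exact h1.trans (coeFn_fourierLp (T := 1) 2 (2 * n + 1)).symm

variable (hS : ∀ (j : Fin 2) (n : ℤ), S j (e n) = e (2 * n + (j : ℕ)))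

include hS

lemma adjS_inner (j : Fin 2) (m p : ℤ) :
    ⟪e p, adjoint (S j) (e m)⟫_ℂ = if 2 * p + (j : ℕ) = m then 1 else 0 := by
  rw [ContinuousLinearMap.adjoint_inner_right, hS, inner_e]

lemma adjS_apply_even (j : Fin 2) (n : ℤ) :
    adjoint (S j) (e (2 * n + (j : ℕ))) = e n := by
  refine ext_vec fun p => ?_
  rw [adjS_inner S hS, inner_e]
  congr 1
  simp only [eq_iff_iff]
  omega

lemma adjS_apply_zero (j : Fin 2) (m : ℤ) (h : ¬ ((2:ℤ) ∣ m - (j : ℕ))) :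
    adjoint (S j) (e m) = 0 := by
  refine ext_vec fun p => ?_
  rw [adjS_inner S hS, inner_zero_right, if_neg]
  intro hc
  exact h ⟨p, by omega⟩

lemma cuntz1 : ∀ j k : Fin 2, adjoint (S j) ∘L S k = if j = k then 1 else 0 := by
  intro j k
  refine ext_clm fun n => ?_
  rw [ContinuousLinearMap.comp_apply, hS]
  by_cases hjk : j = k
  · subst hjk
    rw [if_pos rfl, adjS_apply_even S hS, ContinuousLinearMap.one_apply]
  · rw [if_neg hjk, ContinuousLinearMap.zero_apply, adjS_apply_zero S hS]
    fin_cases j <;> fin_cases k <;> simp_all <;> omega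

lemma cuntz2 : ∑ j : Fin 2, S j ∘L adjoint (S j) = 1 := by
  refine ext_clm fun n => ?_
  rw [ContinuousLinearMap.sum_apply, Fin.sum_univ_two, ContinuousLinearMap.comp_apply,
    ContinuousLinearMap.comp_apply, ContinuousLinearMap.one_apply]
  rcases Int.even_or_odd n with ⟨m, hm⟩ | ⟨m, hm⟩ <;> subst hm
  · have h0 : adjoint (S 0) (e (m + m)) = e m := by
      simpa [two_mul] using adjS_apply_even S hS 0 m
    have h1 : adjoint (S 1) (e (m + m)) = 0 := by
      refine adjS_apply_zero S hS 1 (m + m) ?_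
      simp only [Fin.val_one, Nat.cast_one]
      omega
    rw [h0, h1, map_zero, add_zero, hS]
    congr 1 <;> simp [two_mul]
  · have h1 : adjoint (S 1) (e (2 * m + 1)) = e m := by
      simpa using adjS_apply_even S hS 1 m
    have h0 : adjoint (S 0) (e (2 * m + 1)) = 0 := by
      refine adjS_apply_zero S hS 0 (2 * m + 1) ?_
      simp only [Fin.val_zero, Nat.cast_zero]
      omega
    rw [h0, h1, map_zero, zero_add, hS]
    congr 1 <;> simp

omit hS

/-- The weight of a word. -/
noncomputable def w {k : ℕ} (α : Fin k → Fin 2) : ℤ :=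
  ∑ i : Fin k, ((α i : ℕ) : ℤ) * 2 ^ (i : ℕ)

lemma Sw_cons {k : ℕ} (α : Fin (k + 1) → Fin 2) :
    Sw S α = S (α 0) ∘L Sw S (α ∘ Fin.succ) := by
  simp only [Sw, List.ofFn_succ, List.prod_cons]
  rfl

include hS

lemma Sw_apply {k : ℕ} (α : Fin k → Fin 2) (n : ℤ) :
    Sw S α (e n) = e (2 ^ k * n + w α) := by
  induction k with
  | zero => simp [Sw, w]
  | succ k ih =>
    rw [Sw_cons, ContinuousLinearMap.comp_apply, ih (α ∘ Fin.succ), hS]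
    congr 1
    simp only [w, Fin.sum_univ_succ, Function.comp_apply, Fin.val_succ, Fin.val_zero,
      pow_zero, mul_one, pow_succ]
    rw [mul_add, Finset.mul_sum]
    rw [Finset.sum_congr rfl (fun (x : Fin k) (_ : x ∈ Finset.univ) =>
      (by ring : (2:ℤ) * (((α x.succ : ℕ) : ℤ) * 2 ^ (x:ℕ)) = ((α x.succ : ℕ) : ℤ) * (2 ^ (x:ℕ) * 2)))]
    ring

lemma adjSw_inner {k : ℕ} (α : Fin k → Fin 2) (m p : ℤ) :
    ⟪e p, adjoint (Sw S α) (e m)⟫_ℂ = if 2 ^ k * p + w α = m then 1 else 0 := by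
  rw [ContinuousLinearMap.adjoint_inner_right, Sw_apply S hS, inner_e]

lemma P_apply_mem {k : ℕ} (α : Fin k → Fin 2) (m : ℤ) (h : ((2:ℤ) ^ k) ∣ m - w α) :
    (Sw S α ∘L adjoint (Sw S α)) (e m) = e m := by
  obtain ⟨q, hq⟩ := h
  have hm : m = 2 ^ k * q + w α := by linarith
  have hadj : adjoint (Sw S α) (e m) = e q := by
    refine ext_vec fun p => ?_
    rw [adjSw_inner S hS, inner_e]
    congr 1
    simp only [eq_iff_iff]
    constructor
    · intro hpe
      have h2 : (2:ℤ) ^ k ≠ 0 := by positivity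
      have : (2:ℤ) ^ k * p = 2 ^ k * q := by linarith
      exact mul_left_cancel₀ h2 this
    · rintro rfl
      linarith
  rw [ContinuousLinearMap.comp_apply, hadj, Sw_apply S hS, ← hm]

lemma P_apply_zero {k : ℕ} (α : Fin k → Fin 2) (m : ℤ) (h : ¬ ((2:ℤ) ^ k) ∣ m - w α) :
    (Sw S α ∘L adjoint (Sw S α)) (e m) = 0 := by
  have hadj : adjoint (Sw S α) (e m) = 0 := by
    refine ext_vec fun p => ?_
    rw [adjSw_inner S hS, inner_zero_right, if_neg]
    intro hc
    exact h ⟨p, by linarith⟩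
  rw [ContinuousLinearMap.comp_apply, hadj, map_zero]

omit hS

lemma P_selfadj {k : ℕ} (α : Fin k → Fin 2) :
    adjoint (Sw S α ∘L adjoint (Sw S α)) = Sw S α ∘L adjoint (Sw S α) := by
  rw [ContinuousLinearMap.adjoint_comp, ContinuousLinearMap.adjoint_adjoint]

include hS

lemma P_idem {k : ℕ} (α : Fin k → Fin 2) (x : L2C) :
    (Sw S α ∘L adjoint (Sw S α)) ((Sw S α ∘L adjoint (Sw S α)) x) =
      (Sw S α ∘L adjoint (Sw S α)) x := by
  have hop : (Sw S α ∘L adjoint (Sw S α)) ∘L (Sw S α ∘L adjoint (Sw S α)) =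
      Sw S α ∘L adjoint (Sw S α) := by
    refine ext_clm fun m => ?_
    rw [ContinuousLinearMap.comp_apply]
    by_cases h : ((2:ℤ) ^ k) ∣ m - w α
    · rw [P_apply_mem S hS α m h, P_apply_mem S hS α m h]
    · rw [P_apply_zero S hS α m h, map_zero]
  calc (Sw S α ∘L adjoint (Sw S α)) ((Sw S α ∘L adjoint (Sw S α)) x)
      = ((Sw S α ∘L adjoint (Sw S α)) ∘L (Sw S α ∘L adjoint (Sw S α))) x := rfl
    _ = (Sw S α ∘L adjoint (Sw S α)) x := by rw [hop]

end Stmt19Aux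

open Stmt19Aux in
/-- For the representation of `𝒪_2` on `L²(𝕋)` given by `(S_0 f)(x) = f(2x)` and
`(S_1 f)(x) = e_1(x) f(2x)`, the range of the projection `S_α S_α^*` is the closed span
of the characters `e_n` with `n ≡ α_1 + 2α_2 + ⋯ + 2^{k-1}α_k (mod 2^k)`. -/
theorem stmt_19
    (S : Fin 2 →
      (Lp ℂ 2 (haarAddCircle : Measure UnitAddCircle) →L[ℂ]
        Lp ℂ 2 (haarAddCircle : Measure UnitAddCircle)))
    (hform0 : ∀ g : Lp ℂ 2 (haarAddCircle : Measure UnitAddCircle),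
      ⇑(S 0 g) =ᵐ[(haarAddCircle : Measure UnitAddCircle)] fun x => g (2 • x))
    (hform1 : ∀ g : Lp ℂ 2 (haarAddCircle : Measure UnitAddCircle),
      ⇑(S 1 g) =ᵐ[(haarAddCircle : Measure UnitAddCircle)]
        fun x => fourier 1 x * g (2 • x)) :
    CuntzRep S ∧
      ∀ k : ℕ, 1 ≤ k → ∀ α : Fin k → Fin 2,
        Set.range ⇑(Sw S α ∘L adjoint (Sw S α)) =
          closure ((Submodule.span ℂ
            {g : Lp ℂ 2 (haarAddCircle : Measure UnitAddCircle) |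
              ∃ n : ℤ, n ≡ (∑ i : Fin k, ((α i : ℕ) : ℤ) * 2 ^ (i : ℕ)) [ZMOD (2 ^ k)] ∧
                g = fourierLp 2 n} : Submodule ℂ _) : Set _) := by
  have hS : ∀ (j : Fin 2) (n : ℤ), S j (e n) = e (2 * n + (j : ℕ)) := by
    intro j n
    fin_cases j
    · simpa using S0_apply S hform0 n
    · simpa using S1_apply S hform1 n
  refine ⟨⟨cuntz1 S hS, cuntz2 S hS⟩, ?_⟩
  intro k _ α
  set P := Sw S α ∘L adjoint (Sw S α) with hP
  set K : Submodule ℂ L2C := Submodule.span ℂ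
    {g : L2C | ∃ n : ℤ, n ≡ (∑ i : Fin k, ((α i : ℕ) : ℤ) * 2 ^ (i : ℕ)) [ZMOD (2 ^ k)] ∧
      g = fourierLp 2 n} with hK
  have hwα : (∑ i : Fin k, ((α i : ℕ) : ℤ) * 2 ^ (i : ℕ)) = w α := rfl
  apply Set.Subset.antisymm
  · -- range P ⊆ closure K
    rintro _ ⟨y, rfl⟩
    rw [← Submodule.topologicalClosure_coe, ← Submodule.orthogonal_orthogonal_eq_closure]
    rw [SetLike.mem_coe, Submodule.mem_orthogonal]
    intro g hg
    have hPg : P g = 0 := by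
      refine inner_all_zero fun m => ?_
      have hsa : adjoint P = P := P_selfadj S α
      have h1 : ⟪e m, P g⟫_ℂ = ⟪P (e m), g⟫_ℂ := by
        conv_lhs => rw [← hsa]
        exact ContinuousLinearMap.adjoint_inner_right P (e m) g
      rw [h1]
      by_cases hdvd : ((2:ℤ) ^ k) ∣ m - w α
      · rw [hP, P_apply_mem S hS α m hdvd]
        refine (Submodule.mem_orthogonal K g).mp hg (e m) ?_
        refine Submodule.subset_span ⟨m, ?_, rfl⟩
        rw [hwα, modeq_iff]
        exact hdvd
      · rw [hP, P_apply_zero S hS α m hdvd, inner_zero_left]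
    have hsa : adjoint P = P := P_selfadj S α
    have : ⟪g, P y⟫_ℂ = 0 := by
      conv_lhs => rw [← hsa]
      rw [ContinuousLinearMap.adjoint_inner_right, hPg, inner_zero_left]
    exact this
  · -- closure K ⊆ range P
    have hclosed : IsClosed {x : L2C | P x = x} :=
      isClosed_eq P.continuous continuous_id
    have hKsub : (K : Set L2C) ⊆ {x : L2C | P x = x} := by
      intro x hx
      rw [hK] at hx
      induction hx using Submodule.span_induction with
      | mem u hu =>
        obtain ⟨n, hn, rfl⟩ := hu
        show P (fourierLp 2 n) = fourierLp 2 n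
        have : ((2:ℤ) ^ k) ∣ n - w α := by
          rw [hwα, modeq_iff] at hn
          exact hn
        rw [hP]
        exact P_apply_mem S hS α n this
      | zero => simp
      | add u v _ _ hu hv =>
        show P (u + v) = u + v
        rw [map_add, hu, hv]
      | smul c u _ hu =>
        show P (c • u) = c • u
        rw [ContinuousLinearMap.map_smul, hu]
    have hcl : closure (K : Set L2C) ⊆ {x : L2C | P x = x} :=
      closure_minimal hKsub hclosed
    intro x hx
    exact ⟨x, hcl hx⟩
end
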